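/- arXiv:1301.2806 — 2 statements merged into one kernel-verified Lean document; each statement's English description precedes it below -/
import Mathlib

section
/- Let λ : ℝ → ℝ be C¹ with λ' Lipschitz with constant L. Then for all real x₁, x₂ and θ₁, θ₂ ≥ 0, setting χ = x₁ - x₂ and θ = θ₁ - θ₂, one has -(λ(x₁) - λ(x₂))·θ + (λ'(x₁)θ₁ - λ'(x₂)θ₂)·χ ≤ (L/2)·(θ₁ + θ₂)·χ². -/
lemma integ_sub_self (a b : ℝ) : (∫ t in a..b, (t - a)) = (b - a) ^ 2 / 2 := by
  rw [show (fun t : ℝ => t - a) = (fun t : ℝ => id (t - a)) from rfl,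
    intervalIntegral.integral_comp_sub_right (fun t => id t) a]
  simp [integral_id]

lemma taylor_rem (f : ℝ → ℝ) (L : ℝ) (hf : ContDiff ℝ 1 f)
    (hL : ∀ a b : ℝ, |deriv f a - deriv f b| ≤ L * |a - b|)
    (a b : ℝ) : f b - f a - deriv f a * (b - a) ≤ L / 2 * (b - a) ^ 2 := by
  have hd : Differentiable ℝ f := hf.differentiable one_ne_zero
  have hc : Continuous (deriv f) := hf.continuous_deriv le_rfl
  rcases le_total a b with hab | hab
  · have hint : ∫ t in a..b, deriv f t = f b - f a :=
      intervalIntegral.integral_deriv_eq_sub (fun x _ => hd x) (hc.intervalIntegrable a b)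
    have key : f b - f a - deriv f a * (b - a) = ∫ t in a..b, (deriv f t - deriv f a) := by
      rw [intervalIntegral.integral_sub (hc.intervalIntegrable a b)
        (intervalIntegrable_const), hint, intervalIntegral.integral_const]
      simp [smul_eq_mul]; ring
    rw [key]
    have hmono : (∫ t in a..b, (deriv f t - deriv f a)) ≤ ∫ t in a..b, L * (t - a) := by
      apply intervalIntegral.integral_mono_on hab
        ((hc.sub continuous_const).intervalIntegrable a b)
        ((continuous_const.mul (continuous_id.sub continuous_const)).intervalIntegrable a b)
      intro t ht
      have := hL t a
      rw [abs_of_nonneg (sub_nonneg.mpr ht.1)] at this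
      exact (le_abs_self _).trans this
    refine hmono.trans_eq ?_
    rw [intervalIntegral.integral_const_mul, integ_sub_self]
    ring
  · have hint : ∫ t in b..a, deriv f t = f a - f b :=
      intervalIntegral.integral_deriv_eq_sub (fun x _ => hd x) (hc.intervalIntegrable b a)
    have key : f b - f a - deriv f a * (b - a) = ∫ t in b..a, (deriv f a - deriv f t) := by
      rw [intervalIntegral.integral_sub intervalIntegrable_const
        (hc.intervalIntegrable b a), hint, intervalIntegral.integral_const]
      simp [smul_eq_mul]; ring
    rw [key]
    have hmono : (∫ t in b..a, (deriv f a - deriv f t)) ≤ ∫ t in b..a, L * (a - t) := by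
      apply intervalIntegral.integral_mono_on hab
        ((continuous_const.sub hc).intervalIntegrable b a)
        ((continuous_const.mul (continuous_const.sub continuous_id)).intervalIntegrable b a)
      intro t ht
      have := hL a t
      rw [abs_of_nonneg (sub_nonneg.mpr ht.2)] at this
      exact (le_abs_self _).trans this
    refine hmono.trans_eq ?_
    rw [intervalIntegral.integral_const_mul]
    have h2 : (∫ t in b..a, (a - t)) = (a - b) ^ 2 / 2 := by
      have e : (fun t : ℝ => a - t) = (fun t : ℝ => -(t - a)) := by funext t; ring
      rw [e, intervalIntegral.integral_neg, ← intervalIntegral.integral_symm,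
        integ_sub_self]
      ring
    rw [h2]; ring

theorem stmt3 (f : ℝ → ℝ) (L : ℝ) (hf : ContDiff ℝ 1 f)
    (hL : ∀ a b : ℝ, |deriv f a - deriv f b| ≤ L * |a - b|)
    (x₁ x₂ θ₁ θ₂ : ℝ) (h1 : 0 ≤ θ₁) (h2 : 0 ≤ θ₂) :
    -(f x₁ - f x₂) * (θ₁ - θ₂) + (deriv f x₁ * θ₁ - deriv f x₂ * θ₂) * (x₁ - x₂)
      ≤ L / 2 * (θ₁ + θ₂) * (x₁ - x₂) ^ 2 := by
  have r1 := taylor_rem f L hf hL x₁ x₂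
  have r2 := taylor_rem f L hf hL x₂ x₁
  nlinarith [mul_le_mul_of_nonneg_left r1 h1, mul_le_mul_of_nonneg_left r2 h2]
end

section
/- Let T > 0, κ₀ > 0, κ* > 0, and (k_ε) a family in L¹(0,T) with ∫₀ᵀ (κ₀ v + k_ε*v)v dt ≥ κ*‖v‖²_{L²(0,T)} for all v ∈ L²(0,T) and all ε > 0, and suppose 1*k_ε → κ₀' in L¹(0,T) as ε → 0 for some κ₀' ∈ ℝ. Then κ₀ + κ₀' ≥ κ* > 0. -/
open MeasureTheory

theorem stmt17 (T κ₀ κstar κ₀' : ℝ) (hT : 0 < T) (hκ₀ : 0 < κ₀) (hκstar : 0 < κstar)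
    (k : ℝ → ℝ → ℝ) (hkint : ∀ ε > (0:ℝ), IntegrableOn (k ε) (Set.Ioc 0 T))
    (hcoer : ∀ ε > (0:ℝ), ∀ v : ℝ → ℝ, MemLp v 2 (volume.restrict (Set.Ioc 0 T)) →
      κstar * ∫ t in (0:ℝ)..T, v t ^ 2 ≤
        ∫ t in (0:ℝ)..T, (κ₀ * v t + ∫ s in (0:ℝ)..t, k ε (t - s) * v s) * v t)
    (hconv : Filter.Tendsto
      (fun ε => ∫ t in (0:ℝ)..T, |(∫ s in (0:ℝ)..t, k ε s) - κ₀'|)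
      (nhdsWithin 0 (Set.Ioi 0)) (nhds 0)) :
    κstar ≤ κ₀ + κ₀' ∧ 0 < κ₀ + κ₀' := by
  set g : ℝ → ℝ → ℝ := fun ε t => ∫ s in (0:ℝ)..t, k ε s with hgdef
  -- interval integrability of the primitive
  have hgint : ∀ ε > (0:ℝ), IntervalIntegrable (g ε) volume 0 T := by
    intro ε hε
    have hki : IntervalIntegrable (k ε) volume 0 T := by
      rw [intervalIntegrable_iff_integrableOn_Ioc_of_le hT.le]
      exact hkint ε hε
    have hcont : ContinuousOn (g ε) (Set.uIcc (0:ℝ) T) :=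
      intervalIntegral.continuousOn_primitive_interval' hki Set.left_mem_uIcc
    exact hcont.intervalIntegrable
  -- key inequality from testing with v ≡ 1
  have hkey : ∀ ε > (0:ℝ), κstar * T ≤ κ₀ * T + ∫ t in (0:ℝ)..T, g ε t := by
    intro ε hε
    haveI : IsFiniteMeasure (volume.restrict (Set.Ioc (0:ℝ) T)) := by
      constructor
      simp [Real.volume_Ioc]
    have hmem : MemLp (fun _ : ℝ => (1:ℝ)) 2 (volume.restrict (Set.Ioc (0:ℝ) T)) :=
      memLp_const 1
    have h := hcoer ε hε (fun _ => 1) hmem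
    have hL : (∫ t in (0:ℝ)..T, (1:ℝ) ^ 2) = T := by simp
    have hinner : ∀ t : ℝ, (∫ s in (0:ℝ)..t, k ε (t - s) * 1) = g ε t := by
      intro t
      simp only [mul_one]
      rw [intervalIntegral.integral_comp_sub_left (k ε) t]
      simp [hgdef]
    have hR : (∫ t in (0:ℝ)..T, (κ₀ * 1 + ∫ s in (0:ℝ)..t, k ε (t - s) * 1) * 1)
        = κ₀ * T + ∫ t in (0:ℝ)..T, g ε t := by
      have : (fun t => (κ₀ * 1 + ∫ s in (0:ℝ)..t, k ε (t - s) * 1) * 1)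
          = fun t => κ₀ + g ε t := by
        funext t; simp [hinner t, hgdef]
      rw [this, intervalIntegral.integral_add (intervalIntegrable_const) (hgint ε hε)]
      simp [mul_comm]
    rw [hL] at h
    rw [hR] at h
    exact h
  -- convergence of ∫ g ε to κ₀' * T
  have hlim : Filter.Tendsto (fun ε => ∫ t in (0:ℝ)..T, g ε t)
      (nhdsWithin 0 (Set.Ioi 0)) (nhds (κ₀' * T)) := by
    rw [← tendsto_sub_nhds_zero_iff]
    refine squeeze_zero_norm' ?_ hconv
    filter_upwards [self_mem_nhdsWithin] with ε hε
    have hε' : (0:ℝ) < ε := hε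
    have hsub : (∫ t in (0:ℝ)..T, g ε t) - κ₀' * T
        = ∫ t in (0:ℝ)..T, (g ε t - κ₀') := by
      rw [intervalIntegral.integral_sub (hgint ε hε') intervalIntegrable_const]
      simp [mul_comm]
    rw [Real.norm_eq_abs, hsub]
    exact intervalIntegral.abs_integral_le_integral_abs hT.le
  -- pass to the limit
  have hmain : κstar * T ≤ κ₀ * T + κ₀' * T := by
    have htend : Filter.Tendsto (fun ε => κ₀ * T + ∫ t in (0:ℝ)..T, g ε t)
        (nhdsWithin 0 (Set.Ioi 0)) (nhds (κ₀ * T + κ₀' * T)) :=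
      (tendsto_const_nhds).add hlim
    refine ge_of_tendsto htend ?_
    filter_upwards [self_mem_nhdsWithin] with ε hε
    exact hkey ε hε
  have h1 : κstar ≤ κ₀ + κ₀' := by
    have := (mul_le_mul_iff_of_pos_right hT).mp (by linarith : κstar * T ≤ (κ₀ + κ₀') * T)
    exact this
  exact ⟨h1, lt_of_lt_of_le hκstar h1⟩
end
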